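/- arXiv:2308.00509 — 2 statements merged into one kernel-verified Lean document; each statement's English description precedes it below -/
import Mathlib

section
/- (KKL theorem) There exists a constant c > 0 such that for every n ≥ 2 and every Boolean function f : {-1,1}^n → {-1,1}, there is some k ∈ [n] with I_k(f) ≥ c·Var(f)·(log n)/n. -/
/-!
Let `δ` be the largest influence and `T = ∑ₖ I_k(f)` the total influence. The derivative `D_k f`
takes values in `{0, ±1}`, so Hölder's inequality with exponents `4/3` and `4` together with
Bonami's hypercontractive bound `E[(∑ a_S χ_S)⁴] ≤ (∑ 3^{|S|} a_S²)²` gives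
`∑_{S ∋ k} 3^{-|S|} f̂(S)² ≤ I_k(f)^{3/2} ≤ √δ · I_k(f)`. Summing over `k`, the Fourier weight
of `f` on levels `1, …, m` is at most `3^m √δ T`, and the weight above level `m` is at most `T / m`.
If `δ < c Var(f) log n / n`, then `T ≤ n δ`, and `m ≈ (log n) / 16` makes both parts smaller
than `Var(f) / 2`.
-/

open Finset

noncomputable def bSgn (b : Bool) : ℝ := if b then 1 else -1

noncomputable def bChi {n : ℕ} (S : Finset (Fin n)) (x : Fin n → Bool) : ℝ :=
  ∏ i ∈ S, bSgn (x i)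

noncomputable def bExpect {n : ℕ} (g : (Fin n → Bool) → ℝ) : ℝ :=
  (∑ x : Fin n → Bool, g x) / 2 ^ n

noncomputable def bFourier {n : ℕ} (f : (Fin n → Bool) → ℝ) (S : Finset (Fin n)) : ℝ :=
  bExpect fun x => f x * bChi S x

def bFlip1 {n : ℕ} (k : Fin n) (x : Fin n → Bool) : Fin n → Bool :=
  Function.update x k (!(x k))

def bFlipS {n : ℕ} (T : Finset (Fin n)) (x : Fin n → Bool) : Fin n → Bool :=
  fun i => if i ∈ T then !(x i) else x i

noncomputable def inflC {n : ℕ} (f : (Fin n → Bool) → ℝ) (k : Fin n) : ℝ :=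
  bExpect fun x => if f x ≠ f (bFlip1 k x) then 1 else 0

noncomputable def inflS {n : ℕ} (f : (Fin n → Bool) → ℝ) (k : Fin n) : ℝ :=
  ∑ S ∈ univ.filter (fun S : Finset (Fin n) => k ∈ S), bFourier f S ^ 2

noncomputable def totInfl {n : ℕ} (f : (Fin n → Bool) → ℝ) : ℝ :=
  ∑ S : Finset (Fin n), (S.card : ℝ) * bFourier f S ^ 2

noncomputable def specEnt {n : ℕ} (f : (Fin n → Bool) → ℝ) : ℝ :=
  ∑ S : Finset (Fin n), bFourier f S ^ 2 * Real.logb 2 (1 / bFourier f S ^ 2)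

def IsBooleanFn {n : ℕ} (f : (Fin n → Bool) → ℝ) : Prop :=
  ∀ x, f x = 1 ∨ f x = -1

noncomputable def varF {n : ℕ} (f : (Fin n → Bool) → ℝ) : ℝ :=
  ∑ S ∈ univ.filter (fun S : Finset (Fin n) => S ≠ ∅), bFourier f S ^ 2

lemma bSgn_mul_self (b : Bool) : bSgn b * bSgn b = 1 := by
  cases b <;> norm_num [bSgn]

lemma bChi_mul_bChi {n : ℕ} (S T : Finset (Fin n)) (x : Fin n → Bool) :
    bChi S x * bChi T x = bChi (symmDiff S T) x := by
  have hsq : ∏ i ∈ S ∩ T, bSgn (x i) * bSgn (x i) = 1 :=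
    prod_eq_one fun i _ => bSgn_mul_self (x i)
  have hunion : S ∪ T = symmDiff S T ∪ S ∩ T := (symmDiff_sup_inf S T).symm
  have hdisj : Disjoint (symmDiff S T) (S ∩ T) := disjoint_symmDiff_inf S T
  rw [bChi, bChi, bChi, ← prod_union_inter, hunion, prod_union hdisj,
    mul_assoc, ← prod_mul_distrib, hsq, mul_one]

lemma sum_bChi_mul_bChi_eq_ite {n : ℕ} (x y : Fin n → Bool) :
    ∑ S : Finset (Fin n), bChi S x * bChi S y = if x = y then 2 ^ n else 0 := by
  simp_rw [bChi, ← prod_mul_distrib]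
  rw [← powerset_univ, ← prod_one_add]
  split_ifs with hxy
  · simp [hxy, bSgn_mul_self]
    norm_num
  · obtain ⟨i, hi⟩ := Function.ne_iff.mp hxy
    refine prod_eq_zero (mem_univ i) ?_
    revert hi; cases x i <;> cases y i <;> norm_num [bSgn]

lemma sum_bChi_of_nonempty {n : ℕ} {S : Finset (Fin n)} (hS : S.Nonempty) :
    ∑ x : Fin n → Bool, bChi S x = 0 := by
  have : ∀ x : Fin n → Bool, bChi S x = ∏ i, if i ∈ S then bSgn (x i) else 1 := fun x => by
    rw [bChi, prod_ite_mem, univ_inter]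
  obtain ⟨i, hi⟩ := hS
  simp_rw [this, ← Fintype.prod_sum fun i (b : Bool) => if i ∈ S then bSgn b else 1]
  exact prod_eq_zero (mem_univ i) (by simp [hi, bSgn])

lemma bExpect_sum {n : ℕ} {ι : Type*} (s : Finset ι) (g : ι → (Fin n → Bool) → ℝ) :
    bExpect (fun x => ∑ i ∈ s, g i x) = ∑ i ∈ s, bExpect (g i) := by
  simp only [bExpect, sum_comm (s := s), sum_div]

lemma bExpect_const_mul {n : ℕ} (c : ℝ) (g : (Fin n → Bool) → ℝ) :
    bExpect (fun x => c * g x) = c * bExpect g := by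
  simp only [bExpect, ← mul_sum, mul_div_assoc]

lemma bExpect_bChi_mul_bChi {n : ℕ} (S T : Finset (Fin n)) :
    bExpect (fun x => bChi S x * bChi T x) = if S = T then 1 else 0 := by
  simp only [bChi_mul_bChi, bExpect]
  split_ifs with h
  · simp [h, bChi]
  · rw [sum_bChi_of_nonempty (symmDiff_nonempty.2 h), zero_div]

lemma bFourier_sum_mul_bChi {n : ℕ} (c : Finset (Fin n) → ℝ) (T : Finset (Fin n)) :
    bFourier (fun x => ∑ S, c S * bChi S x) T = c T := by
  simp only [bFourier, sum_mul, mul_assoc, bExpect_sum, bExpect_const_mul, bExpect_bChi_mul_bChi]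
  simp

lemma sum_bFourier_mul_bChi {n : ℕ} (f : (Fin n → Bool) → ℝ) (x : Fin n → Bool) :
    ∑ S, bFourier f S * bChi S x = f x := by
  simp only [bFourier, bExpect, div_mul_eq_mul_div, ← sum_div, sum_mul]
  rw [sum_comm]
  simp only [mul_assoc, ← mul_sum, sum_bChi_mul_bChi_eq_ite]
  simp

lemma bExpect_mul_eq_sum_bFourier_mul {n : ℕ} (f g : (Fin n → Bool) → ℝ) :
    bExpect (fun x => f x * g x) = ∑ S, bFourier f S * bFourier g S := by
  conv_lhs => enter [1, x]; rw [← sum_bFourier_mul_bChi f x]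
  simp only [sum_mul, mul_assoc, bExpect_sum, bExpect_const_mul]
  simp only [bFourier, mul_comm]

noncomputable def bDeriv {n : ℕ} (k : Fin n) (f : (Fin n → Bool) → ℝ) (x : Fin n → Bool) : ℝ :=
  (f x - f (bFlip1 k x)) / 2

lemma bFlip1_involutive {n : ℕ} (k : Fin n) : Function.Involutive (bFlip1 k) := by
  intro x
  simp [bFlip1]

lemma bChi_bFlip1 {n : ℕ} (k : Fin n) (S : Finset (Fin n)) (x : Fin n → Bool) :
    bChi S (bFlip1 k x) = (if k ∈ S then -1 else 1) * bChi S x := by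
  have hsgn : ∀ i, bSgn (bFlip1 k x i) = (if i = k then -1 else 1) * bSgn (x i) := by
    intro i
    by_cases h : i = k
    · subst h
      simp only [bFlip1, Function.update_self, if_true]
      cases x i <;> norm_num [bSgn]
    · simp [bFlip1, h]
  simp only [bChi, hsgn, prod_mul_distrib, prod_ite_eq']

lemma bFourier_comp_bFlip1 {n : ℕ} (k : Fin n) (f : (Fin n → Bool) → ℝ) (S : Finset (Fin n)) :
    bFourier (fun x => f (bFlip1 k x)) S = (if k ∈ S then -1 else 1) * bFourier f S := by
  rw [bFourier, bFourier, ← bExpect_const_mul, bExpect, bExpect,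
    ← (bFlip1_involutive k).bijective.sum_comp (fun x => f (bFlip1 k x) * bChi S x)]
  simp only [bFlip1_involutive k _, bChi_bFlip1, mul_left_comm]

lemma bFourier_bDeriv {n : ℕ} (k : Fin n) (f : (Fin n → Bool) → ℝ) (S : Finset (Fin n)) :
    bFourier (bDeriv k f) S = if k ∈ S then bFourier f S else 0 := by
  have hlin :
      bFourier (bDeriv k f) S = (bFourier f S - bFourier (fun x => f (bFlip1 k x)) S) / 2 := by
    simp only [bFourier, bExpect, bDeriv, ← sub_div, ← sum_sub_distrib, ← sub_mul]
    rw [div_right_comm]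
    congr 1
    rw [sum_div]
    exact sum_congr rfl fun x _ => by ring
  rw [hlin, bFourier_comp_bFlip1]
  split_ifs <;> ring

lemma bDeriv_pow_three {n : ℕ} (k : Fin n) {f : (Fin n → Bool) → ℝ} (hf : IsBooleanFn f)
    (x : Fin n → Bool) : bDeriv k f x ^ 3 = bDeriv k f x := by
  rcases hf x with h1 | h1 <;> rcases hf (bFlip1 k x) with h2 | h2 <;> norm_num [bDeriv, h1, h2]

lemma bExpect_bDeriv_sq {n : ℕ} (k : Fin n) (f : (Fin n → Bool) → ℝ) :
    bExpect (fun x => bDeriv k f x ^ 2) = inflS f k := by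
  simp only [sq]
  rw [bExpect_mul_eq_sum_bFourier_mul, inflS, sum_filter]
  refine sum_congr rfl fun S _ => ?_
  rw [bFourier_bDeriv]
  split_ifs <;> ring

lemma sum_mul_pow_four_le {X : Type*} [Fintype X] (g h : X → ℝ) (hg : ∀ x, g x ^ 3 = g x) :
    (∑ x, g x * h x) ^ 4 ≤ (∑ x, g x ^ 2) ^ 3 * ∑ x, h x ^ 4 := by
  have hg4 : ∀ x, g x ^ 4 = g x ^ 2 := fun x => by rw [pow_succ, hg, sq]
  have hgh : (∑ x, g x * h x) ^ 2 ≤ (∑ x, g x ^ 2) * ∑ x, g x ^ 2 * h x ^ 2 := by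
    have hcs := sum_mul_sq_le_sq_mul_sq univ g fun x => g x ^ 2 * h x
    have hl : ∀ x, g x * (g x ^ 2 * h x) = g x * h x := fun x => by
      rw [← mul_assoc, ← pow_succ', hg]
    have hr : ∀ x, (g x ^ 2 * h x) ^ 2 = g x ^ 2 * h x ^ 2 := fun x => by
      rw [mul_pow, ← pow_mul, hg4]
    simpa only [hl, hr] using hcs
  have hgh2 : (∑ x, g x ^ 2 * h x ^ 2) ^ 2 ≤ (∑ x, g x ^ 2) * ∑ x, h x ^ 4 := by
    have hcs := sum_mul_sq_le_sq_mul_sq univ (fun x => g x ^ 2) fun x => h x ^ 2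
    simpa only [← pow_mul, hg4] using hcs
  calc (∑ x, g x * h x) ^ 4 = ((∑ x, g x * h x) ^ 2) ^ 2 := by ring
    _ ≤ ((∑ x, g x ^ 2) * ∑ x, g x ^ 2 * h x ^ 2) ^ 2 := pow_le_pow_left₀ (sq_nonneg _) hgh 2
    _ = (∑ x, g x ^ 2) ^ 2 * (∑ x, g x ^ 2 * h x ^ 2) ^ 2 := by ring
    _ ≤ (∑ x, g x ^ 2) ^ 2 * ((∑ x, g x ^ 2) * ∑ x, h x ^ 4) := by gcongr
    _ = (∑ x, g x ^ 2) ^ 3 * ∑ x, h x ^ 4 := by ring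

lemma sum_add_pow_four_add_sub_pow_four_le {Y : Type*} [Fintype Y] (u v : Y → ℝ) {P A B : ℝ}
    (hP : 0 ≤ P) (hA : 0 ≤ A) (hB : 0 ≤ B) (hu : ∑ y, u y ^ 4 ≤ P * A ^ 2)
    (hv : ∑ y, v y ^ 4 ≤ P * B ^ 2) :
    ∑ y, ((u y + v y) ^ 4 + (u y - v y) ^ 4) ≤ 2 * P * (A + 3 * B) ^ 2 := by
  have hexpand : ∑ y, ((u y + v y) ^ 4 + (u y - v y) ^ 4)
      = 2 * ∑ y, u y ^ 4 + 12 * ∑ y, u y ^ 2 * v y ^ 2 + 2 * ∑ y, v y ^ 4 := by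
    simp only [mul_sum, ← sum_add_distrib]
    exact sum_congr rfl fun y _ => by ring
  have hcross : ∑ y, u y ^ 2 * v y ^ 2 ≤ P * A * B := by
    have hcs := sum_mul_sq_le_sq_mul_sq univ (fun y => u y ^ 2) fun y => v y ^ 2
    simp only [← pow_mul] at hcs
    refine le_of_sq_le_sq ?_ (by positivity)
    calc (∑ y, u y ^ 2 * v y ^ 2) ^ 2 ≤ (∑ y, u y ^ 4) * ∑ y, v y ^ 4 := hcs
      _ ≤ (P * A ^ 2) * (P * B ^ 2) :=
        mul_le_mul hu hv (sum_nonneg fun y _ => by positivity) (by positivity)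
      _ = (P * A * B) ^ 2 := by ring
  rw [hexpand]
  nlinarith [mul_nonneg hP (sq_nonneg B)]

/- Characters and weights indexed by indicator vectors rather than finsets, so that Bonami's
inequality can be proved by induction on `n` through `Fin.cons`. -/
noncomputable def chiB {n : ℕ} (s x : Fin n → Bool) : ℝ :=
  ∏ i, if s i then bSgn (x i) else 1

noncomputable def weightB {n : ℕ} (s : Fin n → Bool) : ℝ :=
  ∏ i, if s i then 3 else 1

lemma sum_fin_succ_bool {n : ℕ} (F : (Fin (n + 1) → Bool) → ℝ) :
    ∑ x, F x = ∑ y : Fin n → Bool, (F (Fin.cons true y) + F (Fin.cons false y)) := by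
  rw [← (Fin.consEquiv fun _ => Bool).sum_comp, Fintype.sum_prod_type, Fintype.sum_bool,
    sum_add_distrib]
  rfl

lemma sum_mul_chiB_cons {n : ℕ} (a : (Fin (n + 1) → Bool) → ℝ) (b : Bool) (y : Fin n → Bool) :
    ∑ s, a s * chiB s (Fin.cons b y)
      = ∑ t, a (Fin.cons false t) * chiB t y + bSgn b * ∑ t, a (Fin.cons true t) * chiB t y := by
  simp only [sum_fin_succ_bool, chiB, Fin.prod_univ_succ, Fin.cons_zero, Fin.cons_succ,
    sum_add_distrib, mul_sum]
  simp only [if_true, Bool.false_eq_true, if_false, one_mul]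
  rw [add_comm]
  congr 1
  exact sum_congr rfl fun t _ => by ring

lemma sum_weightB_mul_sq_cons {n : ℕ} (a : (Fin (n + 1) → Bool) → ℝ) :
    ∑ s, weightB s * a s ^ 2 =
      ∑ t, weightB t * a (Fin.cons false t) ^ 2 + 3 * ∑ t, weightB t * a (Fin.cons true t) ^ 2 := by
  simp only [sum_fin_succ_bool, weightB, Fin.prod_univ_succ, Fin.cons_zero, Fin.cons_succ,
    sum_add_distrib, mul_sum]
  simp only [if_true, Bool.false_eq_true, if_false, one_mul]
  rw [add_comm]
  congr 1
  exact sum_congr rfl fun t _ => by ring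

lemma weightB_nonneg {n : ℕ} (s : Fin n → Bool) : 0 ≤ weightB s :=
  prod_nonneg fun i _ => by split_ifs <;> norm_num

lemma sum_pow_four_le_of_chiB (n : ℕ) (a : (Fin n → Bool) → ℝ) :
    ∑ x, (∑ s, a s * chiB s x) ^ 4 ≤ 2 ^ n * (∑ s, weightB s * a s ^ 2) ^ 2 := by
  induction n with
  | zero => simp [chiB, weightB, ← pow_mul]
  | succ n ih =>
    have hnonneg : ∀ c : (Fin n → Bool) → ℝ, 0 ≤ ∑ t, weightB t * c t ^ 2 :=
      fun c => sum_nonneg fun t _ => mul_nonneg (weightB_nonneg t) (sq_nonneg _)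
    rw [sum_fin_succ_bool]
    simp only [sum_mul_chiB_cons, sum_weightB_mul_sq_cons, bSgn, if_true, Bool.false_eq_true,
      if_false, one_mul, neg_one_mul, ← sub_eq_add_neg]
    rw [pow_succ, mul_comm _ 2]
    exact (sum_add_pow_four_add_sub_pow_four_le _ _ (by positivity) (hnonneg _) (hnonneg _)
      (ih fun t => a (Fin.cons false t)) (ih fun t => a (Fin.cons true t)))

def finsetEquivBoolFun (α : Type*) [Fintype α] [DecidableEq α] : Finset α ≃ (α → Bool) where
  toFun S i := decide (i ∈ S)
  invFun s := univ.filter fun i => s i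
  left_inv S := by ext; simp
  right_inv s := by funext i; simp

lemma chiB_finsetEquivBoolFun {n : ℕ} (S : Finset (Fin n)) (x : Fin n → Bool) :
    chiB (finsetEquivBoolFun (Fin n) S) x = bChi S x := by
  simp [chiB, bChi, finsetEquivBoolFun, prod_ite_mem]

lemma weightB_finsetEquivBoolFun {n : ℕ} (S : Finset (Fin n)) :
    weightB (finsetEquivBoolFun (Fin n) S) = 3 ^ S.card := by
  simp [weightB, finsetEquivBoolFun, prod_ite_mem]

lemma bExpect_pow_four_le {n : ℕ} (a : Finset (Fin n) → ℝ) :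
    bExpect (fun x => (∑ S, a S * bChi S x) ^ 4) ≤ (∑ S, 3 ^ S.card * a S ^ 2) ^ 2 := by
  set e := finsetEquivBoolFun (Fin n)
  have hchi : ∀ x, ∑ s, a (e.symm s) * chiB s x = ∑ S, a S * bChi S x := fun x => by
    simp only [← e.sum_comp, Equiv.symm_apply_apply, e, chiB_finsetEquivBoolFun]
  have hweight : ∑ s, weightB s * a (e.symm s) ^ 2 = ∑ S, 3 ^ S.card * a S ^ 2 := by
    simp only [← e.sum_comp, Equiv.symm_apply_apply, e, weightB_finsetEquivBoolFun]
  rw [bExpect, div_le_iff₀ (by positivity), mul_comm, ← hweight]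
  simpa only [Function.comp_apply, hchi] using sum_pow_four_le_of_chiB n (a ∘ e.symm)

lemma bExpect_mul_pow_four_le {n : ℕ} (g h : (Fin n → Bool) → ℝ) (hg : ∀ x, g x ^ 3 = g x) :
    bExpect (fun x => g x * h x) ^ 4 ≤
      bExpect (fun x => g x ^ 2) ^ 3 * bExpect (fun x => h x ^ 4) := by
  simp only [bExpect, div_pow]
  rw [div_mul_div_comm, ← pow_succ]
  exact div_le_div_of_nonneg_right (sum_mul_pow_four_le g h hg) (by positivity)

lemma inflS_nonneg {n : ℕ} (f : (Fin n → Bool) → ℝ) (k : Fin n) : 0 ≤ inflS f k :=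
  sum_nonneg fun _ _ => sq_nonneg _

-- The influence of `k` on the smoothed function `T_{1/√3} f`.
noncomputable def noisyInfl {n : ℕ} (f : (Fin n → Bool) → ℝ) (k : Fin n) : ℝ :=
  ∑ S ∈ univ.filter (fun S : Finset (Fin n) => k ∈ S), (3 : ℝ)⁻¹ ^ S.card * bFourier f S ^ 2

lemma noisyInfl_nonneg {n : ℕ} (f : (Fin n → Bool) → ℝ) (k : Fin n) : 0 ≤ noisyInfl f k :=
  sum_nonneg fun _ _ => by positivity

lemma noisyInfl_sq_le {n : ℕ} {f : (Fin n → Bool) → ℝ} (hf : IsBooleanFn f) (k : Fin n) :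
    noisyInfl f k ^ 2 ≤ inflS f k ^ 3 := by
  set g := bDeriv k f
  -- `h = T_{1/3} g`: then `E[g h]` is the noisy influence and Bonami bounds `E[h⁴]` by its square
  set h : (Fin n → Bool) → ℝ := fun x => ∑ S, ((3 : ℝ)⁻¹ ^ S.card * bFourier g S) * bChi S x
  have hgh : bExpect (fun x => g x * h x) = noisyInfl f k := by
    rw [bExpect_mul_eq_sum_bFourier_mul, noisyInfl, sum_filter]
    refine sum_congr rfl fun S _ => ?_
    rw [bFourier_sum_mul_bChi, bFourier_bDeriv]
    split_ifs <;> ring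
  have hh4 : bExpect (fun x => h x ^ 4) ≤ noisyInfl f k ^ 2 := by
    refine (bExpect_pow_four_le _).trans_eq ?_
    rw [noisyInfl, sum_filter]
    congr 1
    refine sum_congr rfl fun S _ => ?_
    have hcancel (c : ℕ) (y : ℝ) :
        (3 : ℝ) ^ c * ((3 : ℝ)⁻¹ ^ c * y) ^ 2 = (3 : ℝ)⁻¹ ^ c * y ^ 2 := by
      rw [inv_pow]; field_simp
    rw [hcancel, bFourier_bDeriv]
    split_ifs <;> simp
  have hholder : noisyInfl f k ^ 4 ≤ inflS f k ^ 3 * noisyInfl f k ^ 2 := by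
    have := bExpect_mul_pow_four_le g h (bDeriv_pow_three k hf)
    rw [hgh, bExpect_bDeriv_sq] at this
    exact this.trans (mul_le_mul_of_nonneg_left hh4 (pow_nonneg (inflS_nonneg f k) 3))
  rcases (noisyInfl_nonneg f k).eq_or_lt with h0 | hpos
  · simpa [← h0] using pow_nonneg (inflS_nonneg f k) 3
  · nlinarith [pow_pos hpos 2]

lemma noisyInfl_le_sqrt_mul_inflS {n : ℕ} {f : (Fin n → Bool) → ℝ} (hf : IsBooleanFn f)
    {k : Fin n} {δ : ℝ} (hδ : inflS f k ≤ δ) : noisyInfl f k ≤ √δ * inflS f k := by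
  have hI := inflS_nonneg f k
  refine le_of_sq_le_sq ?_ (mul_nonneg (Real.sqrt_nonneg δ) hI)
  rw [mul_pow, Real.sq_sqrt (hI.trans hδ)]
  calc noisyInfl f k ^ 2 ≤ inflS f k ^ 3 := noisyInfl_sq_le hf k
    _ = inflS f k * inflS f k ^ 2 := by ring
    _ ≤ δ * inflS f k ^ 2 := by gcongr

lemma sum_sum_filter_mem {α : Type*} [Fintype α] [DecidableEq α] (g : Finset α → ℝ) :
    ∑ k, ∑ S ∈ univ.filter (fun S : Finset α => k ∈ S), g S = ∑ S, (S.card : ℝ) * g S := by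
  simp only [sum_filter]
  rw [sum_comm]
  simp [sum_ite_mem, univ_inter]

lemma sum_inflS {n : ℕ} (f : (Fin n → Bool) → ℝ) : ∑ k, inflS f k = totInfl f :=
  sum_sum_filter_mem _

lemma sum_noisyInfl {n : ℕ} (f : (Fin n → Bool) → ℝ) :
    ∑ k, noisyInfl f k =
      ∑ S : Finset (Fin n), (S.card : ℝ) * ((3 : ℝ)⁻¹ ^ S.card * bFourier f S ^ 2) :=
  sum_sum_filter_mem _

lemma one_le_three_pow_mul_add_div {m s : ℕ} (hm : 1 ≤ m) (hs : 1 ≤ s) :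
    1 ≤ 3 ^ m * ((s : ℝ) * (3 : ℝ)⁻¹ ^ s) + s / m := by
  have hm' : (0 : ℝ) < m := by exact_mod_cast hm
  rcases le_or_gt s m with hsm | hms
  · have hpow : (1 : ℝ) ≤ 3 ^ m * (3 : ℝ)⁻¹ ^ s := by
      rw [inv_pow, ← div_eq_mul_inv, one_le_div (by positivity)]
      exact pow_le_pow_right₀ (by norm_num) hsm
    have hs' : (1 : ℝ) ≤ s := by exact_mod_cast hs
    have : (1 : ℝ) ≤ 3 ^ m * ((s : ℝ) * (3 : ℝ)⁻¹ ^ s) := by nlinarith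
    linarith [div_nonneg (Nat.cast_nonneg s) hm'.le]
  · have : (1 : ℝ) ≤ s / m := by
      rw [one_le_div hm']
      exact_mod_cast hms.le
    linarith [show 0 ≤ 3 ^ m * ((s : ℝ) * (3 : ℝ)⁻¹ ^ s) by positivity]

lemma varF_le_three_pow_mul_add {n : ℕ} (f : (Fin n → Bool) → ℝ) {m : ℕ} (hm : 1 ≤ m) :
    varF f ≤ 3 ^ m * ∑ k, noisyInfl f k + totInfl f / m := by
  rw [sum_noisyInfl, totInfl, mul_sum, sum_div, ← sum_add_distrib, varF]
  calc ∑ S ∈ univ.filter (fun S : Finset (Fin n) => S ≠ ∅), bFourier f S ^ 2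
      ≤ ∑ S ∈ univ.filter (fun S : Finset (Fin n) => S ≠ ∅),
          (3 ^ m * ((S.card : ℝ) * (3⁻¹ ^ S.card * bFourier f S ^ 2)) +
            S.card * bFourier f S ^ 2 / m) := by
        refine sum_le_sum fun S hS => ?_
        have hS : 1 ≤ S.card := card_pos.2 (nonempty_iff_ne_empty.2 (mem_filter.1 hS).2)
        convert mul_le_mul_of_nonneg_right (one_le_three_pow_mul_add_div hm hS)
          (sq_nonneg (bFourier f S)) using 1 <;> ring
    _ ≤ _ := sum_le_sum_of_subset_of_nonneg (subset_univ _) fun S _ _ => by positivity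

lemma varF_le_of_forall_inflS_le {n : ℕ} {f : (Fin n → Bool) → ℝ} (hf : IsBooleanFn f) {δ : ℝ}
    (hδ : ∀ k, inflS f k ≤ δ) {m : ℕ} (hm : 1 ≤ m) :
    varF f ≤ 3 ^ m * √δ * totInfl f + totInfl f / m := by
  have hnoisy : ∑ k, noisyInfl f k ≤ √δ * totInfl f := by
    rw [← sum_inflS, mul_sum]
    exact sum_le_sum fun k _ => noisyInfl_le_sqrt_mul_inflS hf (hδ k)
  calc varF f ≤ 3 ^ m * ∑ k, noisyInfl f k + totInfl f / m := varF_le_three_pow_mul_add f hm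
    _ ≤ 3 ^ m * (√δ * totInfl f) + totInfl f / m := by gcongr
    _ = 3 ^ m * √δ * totInfl f + totInfl f / m := by ring

lemma nine_pow_floor_mul_pow_three_le {L : ℝ} (hL : 0 ≤ L) :
    9 * 9 ^ ⌊L / 16⌋₊ * L ^ 3 ≤ 128 * Real.exp L := by
  set j := ⌊L / 16⌋₊
  have h9 : (9 : ℝ) ≤ Real.exp 4 := by
    have h3 : (3 : ℝ) ≤ Real.exp 2 := by linarith [Real.add_one_le_exp 2]
    have hsq : Real.exp 4 = Real.exp 2 * Real.exp 2 := by rw [← Real.exp_add]; norm_num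
    nlinarith
  have hpow : (9 : ℝ) ^ j ≤ Real.exp (L / 4) :=
    calc (9 : ℝ) ^ j ≤ Real.exp 4 ^ j := pow_le_pow_left₀ (by norm_num) h9 j
      _ = Real.exp (j * 4) := (Real.exp_nat_mul 4 j).symm
      _ ≤ Real.exp (L / 4) :=
        Real.exp_le_exp.2 (by linarith [Nat.floor_le (by positivity : 0 ≤ L / 16)])
  have hcube : L ^ 3 ≤ 128 / 9 * Real.exp (3 / 4 * L) := by
    have := Real.pow_div_factorial_le_exp (3 / 4 * L) (by positivity) 3
    norm_num [Nat.factorial, mul_pow] at this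
    linarith
  have hsplit : Real.exp L = Real.exp (L / 4) * Real.exp (3 / 4 * L) := by
    rw [← Real.exp_add]; ring_nf
  rw [hsplit]
  calc 9 * 9 ^ j * L ^ 3 ≤ 9 * Real.exp (L / 4) * (128 / 9 * Real.exp (3 / 4 * L)) := by gcongr
    _ = 128 * (Real.exp (L / 4) * Real.exp (3 / 4 * L)) := by ring

lemma le_of_forall_le_three_pow_mul_add {n : ℕ} (hn : 2 ≤ n) {W T δ : ℝ} (hW : W ≤ 1) (hδ : 0 ≤ δ)
    (hT : 0 ≤ T) (hTδ : T ≤ n * δ) (hsplit : ∀ m : ℕ, 1 ≤ m → W ≤ 3 ^ m * √δ * T + T / m) :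
    1 / 32 * W * Real.log n / n ≤ δ := by
  set L := Real.log n
  have hn0 : (0 : ℝ) < n := by positivity
  have hL : 0 < L := Real.log_pos (by exact_mod_cast hn)
  by_contra! hlt
  have hW0 : 0 < W := by
    by_contra! hW0
    have : 1 / 32 * W * L / n ≤ 0 := div_nonpos_of_nonpos_of_nonneg (by nlinarith) hn0.le
    linarith
  have hTlt : T < W * L / 32 := by
    calc T ≤ n * δ := hTδ
      _ < n * (1 / 32 * W * L / n) := by gcongr
      _ = W * L / 32 := by field_simp
  -- `m = ⌊L/16⌋ + 1` makes the high-degree tail `T / m` at most `W / 2`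
  set j := ⌊L / 16⌋₊
  have hj : L / 16 < j + 1 := Nat.lt_floor_add_one _
  have htail : T / (j + 1 : ℕ) < W / 2 := by
    rw [div_lt_iff₀ (by positivity)]
    push_cast
    nlinarith
  have hhalf : W / 2 < 3 ^ (j + 1) * √δ * T := by linarith [hsplit (j + 1) (by omega)]
  have hsq : W ^ 2 / 4 < 9 * 9 ^ j * W ^ 3 * L ^ 3 / (32768 * n) :=
    calc W ^ 2 / 4 = (W / 2) ^ 2 := by ring
      _ < (3 ^ (j + 1) * √δ * T) ^ 2 := pow_lt_pow_left₀ hhalf (by positivity) two_ne_zero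
      _ = 9 * 9 ^ j * (δ * T ^ 2) := by
        rw [mul_pow, mul_pow, Real.sq_sqrt hδ, ← pow_mul, Nat.mul_comm, pow_mul]
        norm_num [pow_succ]
        ring
      _ ≤ 9 * 9 ^ j * ((1 / 32 * W * L / n) * (W * L / 32) ^ 2) := by gcongr
      _ = 9 * 9 ^ j * W ^ 3 * L ^ 3 / (32768 * n) := by field_simp; ring
  have hcube : 8192 * n < 9 * 9 ^ j * L ^ 3 := by
    rw [lt_div_iff₀ (by positivity)] at hsq
    have hW3 : W ^ 3 ≤ W ^ 2 := by nlinarith [sq_nonneg W]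
    have hcoef : (0 : ℝ) ≤ 9 * 9 ^ j * L ^ 3 := by positivity
    nlinarith [pow_pos hW0 2, mul_le_mul_of_nonneg_left hW3 hcoef]
  have := nine_pow_floor_mul_pow_three_le hL.le
  rw [Real.exp_log hn0] at this
  linarith

lemma sum_bFourier_sq_of_isBooleanFn {n : ℕ} {f : (Fin n → Bool) → ℝ} (hf : IsBooleanFn f) :
    ∑ S, bFourier f S ^ 2 = 1 := by
  have hsq : ∀ x, f x * f x = 1 := fun x => by rcases hf x with h | h <;> norm_num [h]
  simp only [sq, ← bExpect_mul_eq_sum_bFourier_mul, hsq, bExpect, sum_const, card_univ,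
    Fintype.card_fun, Fintype.card_bool, Fintype.card_fin]
  simp

lemma varF_le_one {n : ℕ} {f : (Fin n → Bool) → ℝ} (hf : IsBooleanFn f) : varF f ≤ 1 :=
  (sum_le_sum_of_subset_of_nonneg (subset_univ _) fun _ _ _ => sq_nonneg _).trans
    (sum_bFourier_sq_of_isBooleanFn hf).le

lemma totInfl_nonneg {n : ℕ} (f : (Fin n → Bool) → ℝ) : 0 ≤ totInfl f :=
  sum_inflS f ▸ sum_nonneg fun k _ => inflS_nonneg f k

theorem kkl_theorem :
    ∃ c : ℝ, 0 < c ∧ ∀ (n : ℕ), 2 ≤ n → ∀ f : (Fin n → Bool) → ℝ, IsBooleanFn f →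
      ∃ k : Fin n, c * varF f * Real.log n / n ≤ inflS f k := by
  refine ⟨1 / 32, by norm_num, fun n hn f hf => ?_⟩
  obtain ⟨k, -, hk⟩ := exists_max_image univ (inflS f) (univ_nonempty_iff.2 ⟨⟨0, by omega⟩⟩)
  have hmax : ∀ j, inflS f j ≤ inflS f k := fun j => hk j (mem_univ j)
  have htot : totInfl f ≤ n * inflS f k :=
    calc totInfl f = ∑ j, inflS f j := (sum_inflS f).symm
      _ ≤ ∑ _j : Fin n, inflS f k := sum_le_sum fun j _ => hmax j
      _ = n * inflS f k := by simp
  exact ⟨k, le_of_forall_le_three_pow_mul_add hn (varF_le_one hf) (inflS_nonneg f k)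
    (totInfl_nonneg f) htot fun m hm => varF_le_of_forall_inflS_le hf hmax hm⟩
end

section
/- There exists a constant c > 0 such that for every Boolean function f : {-1,1}^n → {-1,1}, max_S |f̂(S)| ≥ exp(−c·deg(f)), where deg(f) = max{|S| : f̂(S) ≠ 0}. -/
open Finset

noncomputable def degF {n : ℕ} (f : (Fin n → Bool) → ℝ) : ℕ :=
  (univ.filter (fun S : Finset (Fin n) => bFourier f S ≠ 0)).sup Finset.card

def ptR {n : ℕ} (R : Finset (Fin n)) : Fin n → Bool := fun i => decide (i ∈ R)

lemma bSgn_ptR {n : ℕ} (R : Finset (Fin n)) (i : Fin n) :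
    bSgn (ptR R i) = if i ∈ R then 1 else -1 := by
  by_cases h : i ∈ R <;> simp [ptR, h, bSgn]

lemma sum_chi_mul {n : ℕ} (x y : Fin n → Bool) :
    ∑ S : Finset (Fin n), bChi S x * bChi S y = if x = y then (2:ℝ)^n else 0 := by
  have key : ∑ S : Finset (Fin n), bChi S x * bChi S y
      = ∏ i : Fin n, (bSgn (x i) * bSgn (y i) + 1) := by
    rw [Finset.prod_add]
    rw [← Finset.powerset_univ]
    refine (Finset.sum_congr rfl fun S _ => ?_).symm
    simp [bChi, Finset.prod_mul_distrib]
  rw [key]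
  by_cases h : x = y
  · subst h
    simp [bSgn_mul_self]
    norm_num
  · rw [if_neg h]
    obtain ⟨i, hi⟩ : ∃ i, x i ≠ y i := by
      by_contra hc; push_neg at hc; exact h (funext hc)
    apply Finset.prod_eq_zero (Finset.mem_univ i)
    revert hi
    cases x i <;> cases y i <;> norm_num [bSgn]

lemma inversion {n : ℕ} (f : (Fin n → Bool) → ℝ) (x : Fin n → Bool) :
    ∑ S : Finset (Fin n), bFourier f S * bChi S x = f x := by
  have h2 : ((2:ℝ)^n) ≠ 0 := by positivity
  have e1 : ∀ S : Finset (Fin n), bFourier f S * bChi S x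
      = (∑ y : Fin n → Bool, f y * (bChi S y * bChi S x))/2^n := by
    intro S
    simp only [bFourier, bExpect]
    rw [div_mul_eq_mul_div, Finset.sum_mul]
    congr 1
    exact Finset.sum_congr rfl fun y _ => by ring
  rw [Finset.sum_congr rfl (fun S _ => e1 S), ← Finset.sum_div, Finset.sum_comm]
  have e2 : ∀ y : Fin n → Bool, ∑ S : Finset (Fin n), f y * (bChi S y * bChi S x)
      = if y = x then f y * 2^n else 0 := by
    intro y
    rw [← Finset.mul_sum, sum_chi_mul]
    by_cases h : y = x <;> simp [h]
  rw [Finset.sum_congr rfl (fun y _ => e2 y), Finset.sum_ite_eq' Finset.univ x,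
    if_pos (Finset.mem_univ x), mul_div_assoc, div_self h2, mul_one]

lemma prod_ite_mem {n : ℕ} (A B : Finset (Fin n)) :
    ∏ i ∈ A, (if i ∈ B then (1:ℝ) else -1) = (-1)^((A \ B).card) := by
  rw [← Finset.prod_inter_mul_prod_diff A B (fun i => if i ∈ B then (1:ℝ) else -1)]
  have h1 : ∏ i ∈ A ∩ B, (if i ∈ B then (1:ℝ) else -1) = 1 := by
    apply Finset.prod_eq_one
    intro i hi
    rw [if_pos (Finset.mem_inter.mp hi).2]
  have h2 : ∏ i ∈ A \ B, (if i ∈ B then (1:ℝ) else -1) = (-1)^((A \ B).card) := by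
    rw [Finset.prod_congr rfl (fun i hi => if_neg (Finset.mem_sdiff.mp hi).2),
      Finset.prod_const]
  rw [h1, h2, one_mul]

lemma perR {n : ℕ} (S S' R : Finset (Fin n)) (hR : R ⊆ S) :
    (-1:ℝ)^((S \ R).card) * bChi S' (ptR R)
      = (-1)^((S' \ S).card) * ((∏ _i ∈ R, (1:ℝ)) * ∏ i ∈ S \ R, (if i ∈ S' then (1:ℝ) else -1)) := by
  have hchi : bChi S' (ptR R) = (-1:ℝ)^((S' \ R).card) := by
    unfold bChi
    rw [Finset.prod_congr rfl (fun i _ => bSgn_ptR R i), prod_ite_mem]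
  rw [hchi, Finset.prod_const_one, one_mul, prod_ite_mem]
  -- card identity
  have hs1 : S' \ R = (S' \ S) ∪ ((S \ R) ∩ S') := by
    ext i
    simp only [Finset.mem_sdiff, Finset.mem_union, Finset.mem_inter]
    constructor
    · rintro ⟨hi, hr⟩
      by_cases hS : i ∈ S
      · exact Or.inr ⟨⟨hS, hr⟩, hi⟩
      · exact Or.inl ⟨hi, hS⟩
    · rintro (⟨hi, hs⟩ | ⟨⟨_, hr⟩, hi⟩)
      · exact ⟨hi, fun hr => hs (hR hr)⟩
      · exact ⟨hi, hr⟩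
  have hd : Disjoint (S' \ S) ((S \ R) ∩ S') := by
    rw [Finset.disjoint_left]
    rintro i hi h2
    exact (Finset.mem_sdiff.mp hi).2 (Finset.mem_sdiff.mp (Finset.mem_inter.mp h2).1).1
  have e1 : (S' \ R).card = (S' \ S).card + ((S \ R) ∩ S').card := by
    rw [hs1, Finset.card_union_of_disjoint hd]
  have e2 : (S \ R).card = ((S \ R) ∩ S').card + ((S \ R) \ S').card :=
    (Finset.card_inter_add_card_sdiff _ _).symm
  rw [e1, e2]
  ring_nf
  rw [mul_comm (#(S \ R ∩ S')) 2, pow_mul, neg_one_sq, one_pow, one_mul]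

lemma K_eval {n : ℕ} (S S' : Finset (Fin n)) :
    ∑ R ∈ S.powerset, (-1:ℝ)^((S \ R).card) * bChi S' (ptR R)
      = if S ⊆ S' then (-1)^((S' \ S).card) * 2^S.card else 0 := by
  have e1 : ∑ R ∈ S.powerset, (-1:ℝ)^((S \ R).card) * bChi S' (ptR R)
      = (-1)^((S' \ S).card) * ∑ R ∈ S.powerset,
          ((∏ _i ∈ R, (1:ℝ)) * ∏ i ∈ S \ R, (if i ∈ S' then (1:ℝ) else -1)) := by
    rw [Finset.mul_sum]
    refine Finset.sum_congr rfl fun R hR => ?_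
    exact perR S S' R (Finset.mem_powerset.mp hR)
  rw [e1, ← Finset.prod_add (fun _ => (1:ℝ)) (fun i => if i ∈ S' then (1:ℝ) else -1) S]
  by_cases h : S ⊆ S'
  · rw [if_pos h]
    congr 1
    have : ∀ i ∈ S, (1 + if i ∈ S' then (1:ℝ) else -1) = 2 := by
      intro i hi; rw [if_pos (h hi)]; norm_num
    rw [Finset.prod_congr rfl this, Finset.prod_const]
  · rw [if_neg h, mul_eq_zero]
    right
    obtain ⟨i, hiS, hiS'⟩ : ∃ i ∈ S, i ∉ S' := by
      by_contra hc; push_neg at hc; exact h hc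
    apply Finset.prod_eq_zero hiS
    rw [if_neg hiS']
    norm_num


lemma D_formula {n : ℕ} (f : (Fin n → Bool) → ℝ) (S : Finset (Fin n))
    (hmax : ∀ S' : Finset (Fin n), bFourier f S' ≠ 0 → S'.card ≤ S.card) :
    ∑ R ∈ S.powerset, (-1:ℝ)^((S \ R).card) * f (ptR R)
      = 2^S.card * bFourier f S := by
  calc ∑ R ∈ S.powerset, (-1:ℝ)^((S \ R).card) * f (ptR R)
      = ∑ R ∈ S.powerset, ∑ S' : Finset (Fin n),
          bFourier f S' * ((-1:ℝ)^((S \ R).card) * bChi S' (ptR R)) := by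
        refine Finset.sum_congr rfl fun R _ => ?_
        rw [← inversion f (ptR R), Finset.mul_sum]
        exact Finset.sum_congr rfl fun S' _ => by ring
    _ = ∑ S' : Finset (Fin n), bFourier f S' *
          ∑ R ∈ S.powerset, (-1:ℝ)^((S \ R).card) * bChi S' (ptR R) := by
        rw [Finset.sum_comm]
        exact Finset.sum_congr rfl fun S' _ => by rw [Finset.mul_sum]
    _ = bFourier f S * ∑ R ∈ S.powerset, (-1:ℝ)^((S \ R).card) * bChi S (ptR R) := by
        apply Finset.sum_eq_single
        · intro S' _ hne
          rw [K_eval]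
          by_cases h : S ⊆ S'
          · have hss : S ⊂ S' := Finset.ssubset_iff_subset_ne.mpr ⟨h, fun he => hne he.symm⟩
            have : bFourier f S' = 0 := by
              by_contra hz
              exact absurd (hmax S' hz) (not_le.mpr (Finset.card_lt_card hss))
            rw [this, zero_mul]
          · rw [if_neg h, mul_zero]
        · intro h; exact absurd (Finset.mem_univ S) h
    _ = 2^S.card * bFourier f S := by
        rw [K_eval, if_pos (subset_refl S), Finset.sdiff_self, Finset.card_empty,
          pow_zero, one_mul]
        ring

lemma D_int {n : ℕ} (f : (Fin n → Bool) → ℝ) (hf : IsBooleanFn f) (S : Finset (Fin n)) :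
    ∃ m : ℤ, ∑ R ∈ S.powerset, (-1:ℝ)^((S \ R).card) * f (ptR R) = (m : ℝ) := by
  refine ⟨∑ R ∈ S.powerset, (-1:ℤ)^((S \ R).card) * (if f (ptR R) = 1 then 1 else -1), ?_⟩
  push_cast
  refine Finset.sum_congr rfl fun R _ => ?_
  rcases hf (ptR R) with h | h <;> rw [h] <;> norm_num

theorem fmei_low_degree :
    ∃ c : ℝ, 0 < c ∧ ∀ (n : ℕ) (f : (Fin n → Bool) → ℝ), IsBooleanFn f →
      ∃ S : Finset (Fin n), Real.exp (-c * degF f) ≤ |bFourier f S| := by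
  refine ⟨1, one_pos, fun n f hf => ?_⟩
  -- a nonzero coefficient exists
  have hex : ∃ S : Finset (Fin n), bFourier f S ≠ 0 := by
    by_contra hc
    push_neg at hc
    have hinv := inversion f (fun _ => true)
    simp only [hc, zero_mul, Finset.sum_const_zero] at hinv
    rcases hf (fun _ => true) with h | h <;> rw [h] at hinv <;> norm_num at hinv
  obtain ⟨S₀, hS₀⟩ := hex
  set 𝒮 := Finset.univ.filter (fun S : Finset (Fin n) => bFourier f S ≠ 0) with h𝒮
  have hne : 𝒮.Nonempty := ⟨S₀, Finset.mem_filter.mpr ⟨Finset.mem_univ _, hS₀⟩⟩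
  obtain ⟨S, hSmem, hsup⟩ := Finset.exists_mem_eq_sup 𝒮 hne Finset.card
  have hS0 : bFourier f S ≠ 0 := (Finset.mem_filter.mp hSmem).2
  have hdeg : degF f = S.card := hsup
  have hmax : ∀ S' : Finset (Fin n), bFourier f S' ≠ 0 → S'.card ≤ S.card := by
    intro S' hS'
    rw [← hsup]
    exact Finset.le_sup (Finset.mem_filter.mpr ⟨Finset.mem_univ _, hS'⟩)
  obtain ⟨m, hm⟩ := D_int f hf S
  have hD := D_formula f S hmax
  rw [hm] at hD
  have hpow : (0:ℝ) < 2^S.card := by positivity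
  have hmne : (m:ℝ) ≠ 0 := by
    rw [hD]; exact mul_ne_zero (ne_of_gt hpow) hS0
  have h1m : (1:ℝ) ≤ |(m:ℝ)| := by
    have : m ≠ 0 := by exact_mod_cast hmne
    exact_mod_cast Int.one_le_abs this
  have hkey : (2^S.card)⁻¹ ≤ |bFourier f S| := by
    rw [hD, abs_mul, abs_of_pos hpow] at h1m
    rw [inv_le_iff_one_le_mul₀ hpow]  -- maybe wrong name
    linarith [h1m]
  refine ⟨S, ?_⟩
  have he2 : Real.exp (-1) ≤ 2⁻¹ := by
    rw [Real.exp_neg]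
    have h2e : (2:ℝ) ≤ Real.exp 1 := by
      have := Real.add_one_le_exp (1:ℝ)
      linarith
    rw [inv_le_inv₀ (Real.exp_pos 1) (by norm_num)]
    exact h2e
  calc Real.exp (-1 * (degF f : ℝ)) = Real.exp (-1) ^ (degF f) := by
        rw [mul_comm, Real.exp_nat_mul]
    _ ≤ (2⁻¹ : ℝ) ^ (degF f) := by
        exact pow_le_pow_left₀ (Real.exp_pos _).le he2 _
    _ = (2 ^ S.card)⁻¹ := by rw [hdeg, inv_pow]
    _ ≤ |bFourier f S| := hkey
end
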